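/- Let M_1, …, M_n be DFAs over a common alphabet Σ, with each accepting set F_i nonempty and every state of M_i reachable from its initial state s_i, and let G be the labeled graph obtained from the first reduction construction applied to M_1, …, M_n. Then ⋃_{i=1}^n L(M_i) = Σ* if and only if ⟨G⟩ has a synchronizing deterministic presentation. -/

import Mathlib

/-- A labeled graph over vertex type `V` and alphabet `A`, given by its
labeled-edge relation: `Edge p a q` means there is an edge labeled `a`
from `p` to `q`. -/
structure LabeledGraph (V A : Type) where
  Edge : V → A → V → Prop

namespace LabeledGraph

variable {V A : Type}

/-- `G.Walk p w q` : there is a (finite) path from `p` to `q` labeled `w`. -/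
def Walk (G : LabeledGraph V A) : V → List A → V → Prop
  | p, [], q => p = q
  | p, a :: w, q => ∃ r, G.Edge p a r ∧ Walk G r w q

/-- The follower set of a vertex: labels of finite paths starting at `q`. -/
def follower (G : LabeledGraph V A) (q : V) : Set (List A) :=
  { w | ∃ q', G.Walk q w q' }

/-- The transition action on sets of vertices: `S·w`. -/
def transSet (G : LabeledGraph V A) (S : Set V) (w : List A) : Set V :=
  { q' | ∃ q ∈ S, G.Walk q w q' }

/-- `G` is deterministic (right-resolving). -/
def Deterministic (G : LabeledGraph V A) : Prop :=
  ∀ p a q q', G.Edge p a q → G.Edge p a q' → q = q'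

/-- `G` is essential: every vertex has an outgoing and an incoming edge. -/
def Essential (G : LabeledGraph V A) : Prop :=
  ∀ q, (∃ a r, G.Edge q a r) ∧ (∃ a p, G.Edge p a q)

/-- The sofic shift presented by `G`: labels of bi-infinite paths. -/
def shift (G : LabeledGraph V A) : Set (ℤ → A) :=
  { x | ∃ v : ℤ → V, ∀ j : ℤ, G.Edge (v j) (x j) (v (j + 1)) }

/-- `w` is a synchronizing word for `G`: `Q_G · w` is a singleton. -/
def SyncWord (G : LabeledGraph V A) (w : List A) : Prop :=
  ∃ r, G.transSet Set.univ w = {r}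

/-- A vertex `q` is synchronizing: some word synchronizes to `q`. -/
def SyncVertex (G : LabeledGraph V A) (q : V) : Prop :=
  ∃ w, G.transSet Set.univ w = {q}

/-- `G` is synchronizing: every vertex is synchronizing. -/
def Synchronizing (G : LabeledGraph V A) : Prop :=
  ∀ q, G.SyncVertex q

/-- `G` is follower-separated. -/
def FollowerSeparated (G : LabeledGraph V A) : Prop :=
  ∀ p q, G.follower p = G.follower q → p = q

/-- `G` is irreducible (strongly connected). -/
def StronglyConnected (G : LabeledGraph V A) : Prop :=
  ∀ p q, ∃ w, G.Walk p w q

/-- `q` is reachable from `p`. -/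
def Reachable (G : LabeledGraph V A) (p q : V) : Prop :=
  ∃ w, G.Walk p w q

/-- `C` is an irreducible component: an equivalence class of mutual reachability. -/
def IsIrredComponent (G : LabeledGraph V A) (C : Set V) : Prop :=
  ∃ p, C = { q | G.Reachable p q ∧ G.Reachable q p }

/-- `C` is terminal: everything reachable from `C` lies in `C`. -/
def TerminalSet (G : LabeledGraph V A) (C : Set V) : Prop :=
  ∀ p ∈ C, ∀ q, G.Reachable p q → q ∈ C

/-- `C` is initial: everything that reaches `C` lies in `C`. -/
def InitialSet (G : LabeledGraph V A) (C : Set V) : Prop :=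
  ∀ q ∈ C, ∀ p, G.Reachable p q → p ∈ C

/-- Subgraph induced by a set `P` of vertices. -/
def induce (G : LabeledGraph V A) (P : Set V) : LabeledGraph P A where
  Edge := fun p a q => G.Edge p.1 a q.1

/-- The graph `Ĝ`: vertices are ordered pairs of distinct vertices of `G`,
with an edge labeled `a` from `(p₁,p₂)` to `(q₁,q₂)` iff `G` has edges labeled
`a` from `p₁` to `q₁` and from `p₂` to `q₂`. -/
def pairGraph (G : LabeledGraph V A) : LabeledGraph { pq : V × V // pq.1 ≠ pq.2 } A where
  Edge := fun x a y => G.Edge x.1.1 a y.1.1 ∧ G.Edge x.1.2 a y.1.2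

end LabeledGraph

/-- The word `w` appears in the bi-infinite sequence `x`. -/
def AppearsIn {A : Type} (w : List A) (x : ℤ → A) : Prop :=
  ∃ i : ℤ, ∀ n : Fin w.length, x (i + (n : ℕ)) = w.get n

/-- The language of a subset of the full shift: all finite words appearing
in some point of `X`. -/
def lang {A : Type} (X : Set (ℤ → A)) : Set (List A) :=
  { w | ∃ x ∈ X, AppearsIn w x }

/-- `X` is a shift space. -/
def IsShiftSpace {A : Type} (X : Set (ℤ → A)) : Prop :=
  ∃ F : Set (List A), X = { x | ∀ w ∈ F, ¬ AppearsIn w x }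

/-- `X` is a shift of finite type. -/
def IsSFT {A : Type} (X : Set (ℤ → A)) : Prop :=
  ∃ F : Set (List A), F.Finite ∧ X = { x | ∀ w ∈ F, ¬ AppearsIn w x }

/-- `w` is intrinsically synchronizing for `X`. -/
def IntrinsicallySync {A : Type} (X : Set (ℤ → A)) (w : List A) : Prop :=
  w ∈ lang X ∧ ∀ u v, u ++ w ∈ lang X → w ++ v ∈ lang X → u ++ (w ++ v) ∈ lang X

/-- `X` is an irreducible shift space. -/
def IrreducibleShift {A : Type} (X : Set (ℤ → A)) : Prop :=
  ∀ u ∈ lang X, ∀ v ∈ lang X, ∃ w, u ++ (w ++ v) ∈ lang X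

/-- The follower set of a word `u` in `X`. -/
def followerX {A : Type} (X : Set (ℤ → A)) (u : List A) : Set (List A) :=
  { w | u ++ w ∈ lang X }

/-- `X` is `M`-step: every word of `B(X)` of length at least `M` is
intrinsically synchronizing for `X`. -/
def MStep {A : Type} (X : Set (ℤ → A)) (M : ℕ) : Prop :=
  ∀ w ∈ lang X, M ≤ w.length → IntrinsicallySync X w

/-- A deterministic finite automaton over state type `Q` and alphabet `A`. -/
structure DFA' (Q A : Type) where
  step : Q → A → Q
  start : Q
  accept : Set Q

/-- Extended transition function. -/
def DFA'.evalFrom {Q A : Type} (M : DFA' Q A) (q : Q) (w : List A) : Q :=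
  w.foldl M.step q

/-- The language of a DFA. -/
def DFA'.lang {Q A : Type} (M : DFA' Q A) : Set (List A) :=
  { w | M.evalFrom M.start w ∈ M.accept }

/-- Alphabet `Σ ∪ {◁, ▷, *, ℓ}`. -/
inductive Sym1 (A : Type) : Type
  | letter : A → Sym1 A
  | lm : Sym1 A    -- ◁
  | rm : Sym1 A    -- ▷
  | star : Sym1 A  -- *
  | ell : Sym1 A   -- ℓ

/-- Vertices of the first reduction construction: the pre-initial states `p_i`,
the DFA states, and the two special states `p*` and `s*`. -/
inductive V1 {n : ℕ} (Q : Fin n → Type) : Type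
  | pre : Fin n → V1 Q
  | st : (i : Fin n) → Q i → V1 Q
  | pstar : V1 Q
  | sstar : V1 Q

/-- Edges of the first reduction construction. -/
inductive Red1Edge {n : ℕ} {Q : Fin n → Type} {A : Type} (M : ∀ i, DFA' (Q i) A) :
    V1 Q → Sym1 A → V1 Q → Prop
  /-- self loop labeled `*` on `p_i` -/
  | preLoop (i : Fin n) : Red1Edge M (.pre i) .star (.pre i)
  /-- the embedded DFA transitions -/
  | dfaStep (i : Fin n) (q : Q i) (a : A) :
      Red1Edge M (.st i q) (.letter a) (.st i ((M i).step q a))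
  /-- edge labeled `◁` from `p_i` to `s_i` -/
  | enter (i : Fin n) : Red1Edge M (.pre i) .lm (.st i ((M i).start))
  /-- edge labeled `▷` from each accepting state to `p_1` -/
  | exitAcc (i : Fin n) (q : Q i) (j : Fin n) :
      q ∈ (M i).accept → (j : ℕ) = 0 → Red1Edge M (.st i q) .rm (.pre j)
  /-- edge labeled `ℓ` from each state of `M_i` to `s_i` -/
  | reset (i : Fin n) (q : Q i) : Red1Edge M (.st i q) .ell (.st i ((M i).start))
  /-- self loop labeled `*` on `p*` -/
  | pstarLoop : Red1Edge M .pstar .star .pstar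
  /-- edge labeled `◁` from `p*` to `s*` -/
  | pstarEnter : Red1Edge M .pstar .lm .sstar
  /-- edge labeled `▷` from `s*` to `p_1` -/
  | sstarExit (j : Fin n) : (j : ℕ) = 0 → Red1Edge M .sstar .rm (.pre j)
  /-- self loop labeled `a` on `s*` for each `a ∈ Σ` -/
  | sstarLoop (a : A) : Red1Edge M .sstar (.letter a) .sstar
  /-- edge labeled `ℓ` from `p_i` to `p_{i+1}` for `i = 1, …, n-1` -/
  | chain (i j : Fin n) : (j : ℕ) = (i : ℕ) + 1 → Red1Edge M (.pre i) .ell (.pre j)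
  /-- edge labeled `ℓ` from `p_n` to `s*` -/
  | lastChain (i : Fin n) : (i : ℕ) + 1 = n → Red1Edge M (.pre i) .ell .sstar

/-- The labeled graph `G` of the first reduction construction. -/
def Red1 {n : ℕ} {Q : Fin n → Type} {A : Type} (M : ∀ i, DFA' (Q i) A) :
    LabeledGraph (V1 Q) (Sym1 A) where
  Edge := Red1Edge M

section General

namespace LabeledGraph

variable {V W A : Type} {G : LabeledGraph V A}

lemma Walk.nil (p : V) : G.Walk p [] p := rfl

lemma walk_append {p q r : V} {u u' : List A}
    (h : G.Walk p u q) (h' : G.Walk q u' r) : G.Walk p (u ++ u') r := by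
  induction u generalizing p with
  | nil => cases h; exact h'
  | cons a t ih =>
    obtain ⟨s, hs, hw⟩ := h
    exact ⟨s, hs, ih hw⟩

lemma walk_split {p r : V} {u u' : List A}
    (h : G.Walk p (u ++ u') r) : ∃ q, G.Walk p u q ∧ G.Walk q u' r := by
  induction u generalizing p with
  | nil => exact ⟨p, rfl, h⟩
  | cons a t ih =>
    obtain ⟨s, hs, hw⟩ := h
    obtain ⟨q, h1, h2⟩ := ih hw
    exact ⟨q, ⟨s, hs, h1⟩, h2⟩

lemma walk_det (hd : G.Deterministic) {p q q' : V} {u : List A}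
    (h : G.Walk p u q) (h' : G.Walk p u q') : q = q' := by
  induction u generalizing p with
  | nil => cases h; cases h'; rfl
  | cons a t ih =>
    obtain ⟨s, hs, hw⟩ := h
    obtain ⟨s', hs', hw'⟩ := h'
    cases hd _ _ _ _ hs hs'
    exact ih hw hw'

/-- extract the vertex sequence of a walk -/
lemma walk_fn {p q : V} {u : List A} (h : G.Walk p u q) :
    ∃ f : ℕ → V, f 0 = p ∧ f u.length = q ∧
      ∀ t (ht : t < u.length), G.Edge (f t) (u.get ⟨t, ht⟩) (f (t + 1)) := by
  induction u generalizing p with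
  | nil =>
    exact ⟨fun _ => p, rfl, h, fun t ht => absurd ht (Nat.not_lt_zero t)⟩
  | cons a t ih =>
    obtain ⟨s, hs, hw⟩ := h
    obtain ⟨f, hf0, hfl, hfe⟩ := ih hw
    refine ⟨fun k => Nat.casesOn k p f, rfl, hfl, ?_⟩
    rintro (_ | k) hk
    · simpa [hf0] using hs
    · exact hfe k (by simpa using hk)

/-- a segment of a bi-infinite path is a walk -/
lemma path_segment {v : ℤ → V} {x : ℤ → A}
    (hv : ∀ j, G.Edge (v j) (x j) (v (j + 1))) (i : ℤ) (u : List A)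
    (hu : ∀ n : Fin u.length, x (i + (n : ℕ)) = u.get n) :
    G.Walk (v i) u (v (i + u.length)) := by
  induction u generalizing i with
  | nil =>
    have : i + (([] : List A).length : ℕ) = i := by simp
    rw [this]
    exact rfl
  | cons a t ih =>
    refine ⟨v (i + 1), ?_, ?_⟩
    · have h0 : x i = a := by simpa using hu ⟨0, by simp⟩
      exact h0 ▸ hv i
    · have := ih (i + 1) (fun n => by
        have := hu ⟨(n : ℕ) + 1, by simpa using Nat.succ_lt_succ n.isLt⟩
        simpa [add_assoc, add_comm, add_left_comm] using this)
      have hc : i + 1 + (t.length : ℤ) = i + ((a :: t).length : ℕ) := by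
        simp; ring
      rwa [hc] at this

lemma mem_lang_shift_of_walk (hE : G.Essential) {p q : V} {u : List A}
    (h : G.Walk p u q) : u ∈ lang G.shift := by
  classical
  choose fa fv hf using fun r => (hE r).1
  choose ba bv hb using fun r => (hE r).2
  obtain ⟨f, hf0, hfl, hfe⟩ := walk_fn h
  set F : ℕ → V := fun k => if k ≤ u.length then f k else fv^[k - u.length] q with hFdef
  have hF2 : ∀ k, u.length ≤ k → F k = fv^[k - u.length] q := by
    intro k hk
    rcases eq_or_lt_of_le hk with hk' | hk'
    · simp only [hFdef, ← hk', if_pos le_rfl, Nat.sub_self, Function.iterate_zero, id, hfl]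
    · simp only [hFdef]
      rw [if_neg (by omega : ¬ k ≤ u.length)]
  set xF : ℕ → A := fun k => if hk : k < u.length then u.get ⟨k, hk⟩
      else fa (fv^[k - u.length] q) with hxFdef
  have hFe : ∀ k, G.Edge (F k) (xF k) (F (k + 1)) := by
    intro k
    by_cases hk : k < u.length
    · have e1 : F k = f k := by simp only [hFdef, if_pos (le_of_lt hk)]
      have e2 : F (k + 1) = f (k + 1) := by
        simp only [hFdef]
        rw [if_pos (by omega : k + 1 ≤ u.length)]
      have e3 : xF k = u.get ⟨k, hk⟩ := by simp only [hxFdef, dif_pos hk]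
      rw [e1, e2, e3]; exact hfe k hk
    · have e1 : F k = fv^[k - u.length] q := hF2 k (by omega)
      have e2 : F (k + 1) = fv^[(k - u.length) + 1] q := by
        rw [hF2 (k+1) (by omega)]
        congr 1
        omega
      have e3 : xF k = fa (fv^[k - u.length] q) := by simp only [hxFdef, dif_neg hk]
      rw [e1, e2, e3, Function.iterate_succ_apply']
      exact hf _
  have hBe : ∀ k : ℕ, G.Edge (bv^[k + 1] p) (ba (bv^[k] p)) (bv^[k] p) := by
    intro k
    rw [Function.iterate_succ_apply']
    exact hb _
  refine ⟨(fun j : ℤ => if j < 0 then ba (bv^[(-(j+1)).toNat] p) else xF j.toNat),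
    ⟨(fun j : ℤ => if j < 0 then bv^[(-j).toNat] p else F j.toNat), ?_⟩, 0, ?_⟩
  · intro j
    rcases lt_or_ge j 0 with hj | hj
    · have h1 : (-j).toNat = (-(j+1)).toNat + 1 := by omega
      simp only [if_pos hj, h1]
      rcases lt_or_ge (j + 1) 0 with hj1 | hj1
      · simp only [if_pos hj1]
        exact hBe _
      · have hj1' : j + 1 = 0 := by omega
        have h2 : (-(j+1)).toNat = 0 := by omega
        simp only [if_neg (by omega : ¬ j + 1 < 0), h2]
        have : F (j+1).toNat = p := by
          have : (j+1).toNat = 0 := by omega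
          rw [this]
          simp only [hFdef, if_pos (Nat.zero_le _), hf0]
        rw [this]
        simpa using hBe 0
    · have h3 : ¬ j < 0 := by omega
      have h4 : ¬ j + 1 < 0 := by omega
      have h5 : (j + 1).toNat = j.toNat + 1 := by omega
      simp only [if_neg h3, if_neg h4, h5]
      exact hFe _
  · intro nn
    have h1 : ¬ ((0 : ℤ) + (nn : ℕ) < 0) := by omega
    simp only [if_neg h1]
    have h2 : ((0 : ℤ) + (nn : ℕ)).toNat = (nn : ℕ) := by omega
    rw [h2]
    simp only [hxFdef, dif_pos nn.isLt]

lemma exists_walk_of_mem_lang_shift {u : List A}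
    (h : u ∈ lang G.shift) : ∃ p q, G.Walk p u q := by
  obtain ⟨x, ⟨v, hv⟩, i, hi⟩ := h
  exact ⟨v i, v (i + u.length), path_segment hv i u hi⟩

end LabeledGraph

end General
section Red1Lemmas

open LabeledGraph

variable {n : ℕ} {Q : Fin n → Type} {A : Type} {M : ∀ i, DFA' (Q i) A}

lemma red1_star_edge {p q : V1 Q} (h : (Red1 M).Edge p .star q) :
    q = p ∧ ((∃ i, p = .pre i) ∨ p = .pstar) := by
  cases h with
  | preLoop i => exact ⟨rfl, Or.inl ⟨i, rfl⟩⟩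
  | pstarLoop => exact ⟨rfl, Or.inr rfl⟩

lemma red1_rm_edge (hn : 0 < n) {p q : V1 Q} (h : (Red1 M).Edge p .rm q) :
    q = .pre ⟨0, hn⟩ := by
  cases h with
  | exitAcc i q' j hq hj => exact congrArg V1.pre (Fin.ext hj)
  | sstarExit j hj => exact congrArg V1.pre (Fin.ext hj)

lemma red1_lm_pre {i : Fin n} {q : V1 Q} (h : (Red1 M).Edge (.pre i) .lm q) :
    q = .st i ((M i).start) := by
  cases h; rfl

lemma red1_to_pstar {p : V1 Q} {a : Sym1 A} (h : (Red1 M).Edge p a .pstar) :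
    p = .pstar ∧ a = .star := by
  cases h; exact ⟨rfl, rfl⟩

lemma red1_from_pstar {q : V1 Q} {a : Sym1 A} (h : (Red1 M).Edge .pstar a q) :
    (q = .pstar ∧ a = .star) ∨ (q = .sstar ∧ a = .lm) := by
  cases h
  · exact Or.inl ⟨rfl, rfl⟩
  · exact Or.inr ⟨rfl, rfl⟩

lemma red1_from_sstar {q : V1 Q} {a : Sym1 A} (h : (Red1 M).Edge .sstar a q) :
    (∃ b, q = .sstar ∧ a = .letter b) ∨ (∃ j : Fin n, (j : ℕ) = 0 ∧ q = .pre j ∧ a = .rm) := by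
  cases h with
  | sstarExit j hj => exact Or.inr ⟨j, hj, rfl, rfl⟩
  | sstarLoop b => exact Or.inl ⟨b, rfl, rfl⟩

lemma red1_letter_st {i : Fin n} {q : Q i} {a : A} {r : V1 Q}
    (h : (Red1 M).Edge (.st i q) (.letter a) r) : r = .st i ((M i).step q a) := by
  cases h; rfl

lemma red1_rm_st {i : Fin n} {q : Q i} {r : V1 Q}
    (h : (Red1 M).Edge (.st i q) .rm r) : q ∈ (M i).accept := by
  cases h; assumption

/-- walks labeled by letters starting at a DFA state follow the DFA -/
lemma red1_letter_walk {i : Fin n} {q : Q i} {u : List A} {r : V1 Q}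
    (h : (Red1 M).Walk (.st i q) (u.map .letter) r) :
    r = .st i ((M i).evalFrom q u) := by
  induction u generalizing q with
  | nil => exact h.symm
  | cons a t ih =>
    obtain ⟨s, hs, hw⟩ := h
    rw [red1_letter_st hs] at hw
    exact ih hw

/-- there is a walk in `Red1` following the DFA -/
lemma red1_dfa_walk (i : Fin n) (q : Q i) (u : List A) :
    (Red1 M).Walk (.st i q) (u.map .letter) (.st i ((M i).evalFrom q u)) := by
  induction u generalizing q with
  | nil => exact rfl
  | cons a t ih => exact ⟨_, Red1Edge.dfaStep i q a, ih ((M i).step q a)⟩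

/-- star walks don't move -/
lemma red1_star_walk {p q : V1 Q} {k : ℕ}
    (h : (Red1 M).Walk p (List.replicate k .star) q) : q = p := by
  induction k generalizing p with
  | zero => exact h.symm
  | succ k ih =>
    obtain ⟨s, hs, hw⟩ := h
    rw [(red1_star_edge hs).1] at hw
    exact ih hw

/-- walks ending at pstar consist of stars -/
lemma red1_walk_to_pstar {p : V1 Q} {u : List (Sym1 A)}
    (h : (Red1 M).Walk p u .pstar) :
    p = .pstar ∧ u = List.replicate u.length .star := by
  induction u generalizing p with
  | nil => exact ⟨h, rfl⟩
  | cons a t ih =>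
    obtain ⟨s, hs, hw⟩ := h
    obtain ⟨hs', ht⟩ := ih hw
    rw [hs'] at hs
    obtain ⟨hp, ha⟩ := red1_to_pstar hs
    refine ⟨hp, ?_⟩
    simp only [List.length_cons, List.replicate_succ, ha]
    rw [← ht]

lemma red1_det : (Red1 M).Deterministic := by
  rintro p a q q' h h'
  cases h <;> cases h' <;> first
    | rfl
    | (exfalso; omega)
    | (congr 1; exact Fin.ext (by omega))

lemma red1_essential (hn : 0 < n) (hacc : ∀ i, ((M i).accept).Nonempty)
    (hreach : ∀ i (q : Q i), ∃ w, (M i).evalFrom (M i).start w = q) :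
    (Red1 M).Essential := by
  intro v
  constructor
  · cases v with
    | pre i => exact ⟨_, _, Red1Edge.preLoop i⟩
    | st i q => exact ⟨_, _, Red1Edge.reset i q⟩
    | pstar => exact ⟨_, _, Red1Edge.pstarLoop⟩
    | sstar => exact ⟨_, _, Red1Edge.sstarExit ⟨0, hn⟩ rfl⟩
  · cases v with
    | pre j =>
      rcases Nat.eq_zero_or_pos (j : ℕ) with hj | hj
      · obtain ⟨qa, hqa⟩ := hacc ⟨0, hn⟩
        exact ⟨_, _, Red1Edge.exitAcc ⟨0, hn⟩ qa j hqa hj⟩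
      · refine ⟨_, _, Red1Edge.chain ⟨(j : ℕ) - 1, by omega⟩ j (by simp; omega)⟩
    | st i q =>
      obtain ⟨w, hw⟩ := hreach i q
      rcases List.eq_nil_or_concat w with hw' | ⟨u, a, hw'⟩
      · subst hw'
        have hq : q = (M i).start := hw.symm
        subst hq
        exact ⟨_, _, Red1Edge.reset i (M i).start⟩
      · subst hw'
        have hq : q = (M i).step ((M i).evalFrom (M i).start u) a := by
          rw [← hw]
          simp [DFA'.evalFrom]
        subst hq
        exact ⟨_, _, Red1Edge.dfaStep i _ a⟩
    | pstar => exact ⟨_, _, Red1Edge.pstarLoop⟩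
    | sstar => exact ⟨_, _, Red1Edge.pstarEnter⟩

end Red1Lemmas
section Backward

open LabeledGraph

/-- the point `*^∞ ◁ w ▷ *^∞` -/
def bigX {A : Type} (w : List A) : ℤ → Sym1 A := fun j =>
  if h1 : j < 0 then .star
  else if h2 : j = 0 then .lm
  else if h3 : j ≤ (w.length : ℤ) then .letter (w.get ⟨(j - 1).toNat, by omega⟩)
  else if j = (w.length : ℤ) + 1 then .rm
  else .star

variable {A : Type} {w : List A}

lemma bigX_neg {j : ℤ} (h : j < 0) : bigX w j = .star := by
  unfold bigX
  rw [dif_pos h]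

lemma bigX_zero : bigX w 0 = .lm := by
  unfold bigX
  rw [dif_neg (show ¬ (0:ℤ) < 0 by omega), dif_pos rfl]

lemma bigX_mid (t : ℕ) (ht : t < w.length) :
    bigX w (1 + (t : ℤ)) = .letter (w.get ⟨t, ht⟩) := by
  unfold bigX
  rw [dif_neg (show ¬ (1 + (t:ℤ) < 0) by omega),
    dif_neg (show ¬ (1 + (t:ℤ) = 0) by omega),
    dif_pos (show 1 + (t:ℤ) ≤ (w.length : ℤ) by omega)]
  exact congrArg _ (congrArg w.get (Fin.ext (show ((1:ℤ) + t - 1).toNat = t by omega)))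

lemma bigX_rm : bigX w ((w.length : ℤ) + 1) = .rm := by
  unfold bigX
  rw [dif_neg (show ¬ ((w.length:ℤ) + 1 < 0) by omega),
    dif_neg (show ¬ ((w.length:ℤ) + 1 = 0) by omega),
    dif_neg (show ¬ ((w.length:ℤ) + 1 ≤ (w.length:ℤ)) by omega), if_pos rfl]

lemma bigX_top {j : ℤ} (h : (w.length : ℤ) + 2 ≤ j) : bigX w j = .star := by
  unfold bigX
  rw [dif_neg (show ¬ (j < 0) by omega), dif_neg (show ¬ (j = 0) by omega),
    dif_neg (show ¬ (j ≤ (w.length:ℤ)) by omega),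
    if_neg (show ¬ (j = (w.length:ℤ) + 1) by omega)]

variable {n : ℕ} {Q : Fin n → Type} {M : ∀ i, DFA' (Q i) A}

/-- the canonical path of `bigX` -/
def bigV {n : ℕ} (Q : Fin n → Type) (hn : 0 < n) {A : Type} (w : List A) : ℤ → V1 Q :=
  fun j => if j ≤ 0 then .pstar else if j ≤ (w.length : ℤ) + 1 then .sstar
    else .pre ⟨0, hn⟩

lemma bigX_mem_shift (hn : 0 < n) (w : List A) : bigX w ∈ (Red1 M).shift := by
  have hV1 : ∀ j : ℤ, j ≤ 0 → bigV Q hn w j = .pstar := by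
    intro j hj; unfold bigV; rw [if_pos hj]
  have hV2 : ∀ j : ℤ, 0 < j → j ≤ (w.length : ℤ) + 1 → bigV Q hn w j = .sstar := by
    intro j hj hj'; unfold bigV; rw [if_neg (show ¬ j ≤ 0 by omega), if_pos hj']
  have hV3 : ∀ j : ℤ, (w.length : ℤ) + 1 < j → bigV Q hn w j = .pre ⟨0, hn⟩ := by
    intro j hj; unfold bigV
    rw [if_neg (show ¬ j ≤ 0 by omega), if_neg (show ¬ j ≤ (w.length : ℤ) + 1 by omega)]
  refine ⟨bigV Q hn w, ?_⟩
  intro j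
  rcases lt_trichotomy j 0 with hj | hj | hj
  · rw [hV1 j (by omega), hV1 (j+1) (by omega), bigX_neg hj]
    exact Red1Edge.pstarLoop
  · subst hj
    have h01 : (0:ℤ) + 1 = 1 := by norm_num
    rw [hV1 0 le_rfl, h01, hV2 1 (by omega) (by omega), bigX_zero]
    exact Red1Edge.pstarEnter
  · rcases lt_trichotomy j ((w.length : ℤ) + 1) with hj2 | hj2 | hj2
    · rw [hV2 j (by omega) (by omega), hV2 (j+1) (by omega) (by omega)]
      have ht : (j - 1).toNat < w.length := by omega
      have hjj : j = 1 + ((j-1).toNat : ℤ) := by omega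
      rw [hjj, bigX_mid _ ht]
      exact Red1Edge.sstarLoop _
    · subst hj2
      rw [hV2 _ (by omega) le_rfl, hV3 _ (by omega), bigX_rm]
      exact Red1Edge.sstarExit ⟨0, hn⟩ rfl
    · rw [hV3 _ (by omega), hV3 _ (by omega), bigX_top (by omega)]
      exact Red1Edge.preLoop _

/-- stars stay at a `pre` vertex -/
lemma red1_pre_star_walk (i : Fin n) (k : ℕ) :
    (Red1 M).Walk (.pre i) (List.replicate k .star) (.pre i) := by
  induction k with
  | zero => exact rfl
  | succ k ih => exact ⟨_, Red1Edge.preLoop i, ih⟩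

theorem red1_backward [Fintype A] (hn : 0 < n)
    (hacc : ∀ i, ((M i).accept).Nonempty)
    (hreach : ∀ i (q : Q i), ∃ w, (M i).evalFrom (M i).start w = q)
    {m : ℕ} (H : LabeledGraph (Fin m) (Sym1 A))
    (hess : H.Essential) (hsync : H.Synchronizing)
    (hshift : H.shift = (Red1 M).shift) :
    (⋃ i, (M i).lang) = Set.univ := by
  classical
  have hGess : (Red1 M).Essential := red1_essential hn hacc hreach
  rw [Set.eq_univ_iff_forall]
  intro w
  by_contra hw
  have hw' : ∀ i, (M i).evalFrom (M i).start w ∉ (M i).accept := by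
    intro i hi
    exact hw (Set.mem_iUnion.2 ⟨i, hi⟩)
  -- the point bigX w lies in the shift of H
  have hx0 : bigX w ∈ H.shift := by
    rw [hshift]; exact bigX_mem_shift hn w
  obtain ⟨vH, hvH⟩ := hx0
  -- pigeonhole on negative coordinates
  obtain ⟨k1, k2, hk12, heq⟩ :=
    Finite.exists_ne_map_eq_of_infinite (fun k : ℕ => vH (-(k : ℤ) - 1))
  wlog hlt : k1 < k2 generalizing k1 k2
  · exact this k2 k1 hk12.symm heq.symm (by omega)
  set j1 : ℤ := -(k2 : ℤ) - 1 with hj1def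
  set j2 : ℤ := -(k1 : ℤ) - 1 with hj2def
  have hj1 : j1 < j2 := by omega
  have hj2neg : j2 ≤ -1 := by omega
  have heq' : vH j1 = vH j2 := heq.symm
  -- walks along the point
  have hrep : ∀ (i : ℤ) (c : ℕ), (∀ t : ℤ, i ≤ t → t < i + c → bigX w t = .star) →
      H.Walk (vH i) (List.replicate c .star) (vH (i + c)) := by
    intro i c hc
    have := path_segment hvH i (List.replicate c (Sym1.star (A := A))) (fun nn => by
      rw [List.get_eq_getElem, List.getElem_replicate]
      refine hc _ (by omega) ?_
      have : (nn : ℕ) < c := by simpa using nn.isLt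
      omega)
    simpa using this
  set c : ℕ := (j2 - j1).toNat with hcdef
  set e : ℕ := (-j1).toNat with hedef
  have he1 : 1 ≤ e := by omega
  have W1 : H.Walk (vH j1) (List.replicate c .star) (vH j2) := by
    have := hrep j1 c (fun t h1 h2 => bigX_neg (by omega))
    have hco : j1 + (c : ℤ) = j2 := by omega
    rwa [hco] at this
  have Wa : H.Walk (vH j1) (List.replicate e .star) (vH 0) := by
    have := hrep j1 e (fun t h1 h2 => bigX_neg (by omega))
    have hco : j1 + (e : ℤ) = 0 := by omega
    rwa [hco] at this
  have Wb : H.Walk (vH 0) [.lm] (vH 1) := by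
    have := path_segment hvH 0 [Sym1.lm (A := A)] (fun nn => by
      have h0 : (nn : ℕ) = 0 := by
        have h := nn.isLt
        simp only [List.length_singleton] at h
        omega
      rw [h0, List.get_eq_getElem, List.getElem_singleton]
      simpa using bigX_zero)
    simpa using this
  have Wc : H.Walk (vH 1) (w.map .letter) (vH (1 + w.length)) := by
    have := path_segment hvH 1 (w.map Sym1.letter) (fun nn => by
      have hlt : (nn : ℕ) < w.length := by simpa using nn.isLt
      rw [bigX_mid _ hlt]
      simp [List.getElem_map])
    simpa using this
  have Wd : H.Walk (vH (1 + w.length)) [.rm] (vH (1 + w.length + 1)) := by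
    have := path_segment hvH (1 + w.length) [Sym1.rm (A := A)] (fun nn => by
      have hco : (1 : ℤ) + (w.length : ℕ) + ((nn : ℕ) : ℤ) = (w.length : ℤ) + 1 := by
        have h := nn.isLt
        simp only [List.length_singleton] at h
        omega
      rw [hco, bigX_rm, List.get_eq_getElem, List.getElem_singleton])
    simpa using this
  -- the tail walk from vH j1
  have Wtail : H.Walk (vH j1)
      (List.replicate e .star ++ ([.lm] ++ (w.map .letter ++ [.rm])))
      (vH (1 + w.length + 1)) :=
    walk_append Wa (walk_append Wb (walk_append Wc Wd))
  -- synchronizing word for vH j1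
  obtain ⟨mw, hmw⟩ := hsync (vH j1)
  have hvm : vH j1 ∈ H.transSet Set.univ mw := by rw [hmw]; rfl
  obtain ⟨pm, -, hpm⟩ := hvm
  -- first big walk: mw ++ *^(c+e) ◁ w ▷
  have Wbig1 : H.Walk pm
      (mw ++ (List.replicate (c + e) .star ++ ([.lm] ++ (w.map .letter ++ [.rm]))))
      (vH (1 + w.length + 1)) := by
    refine walk_append hpm (walk_append ?_ (walk_append Wb (walk_append Wc Wd)))
    rw [List.replicate_add]
    exact walk_append W1 (heq' ▸ Wa)
  have hU1 : (mw ++ (List.replicate (c + e) .star ++ ([.lm] ++ (w.map .letter ++ [.rm]))))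
      ∈ lang (Red1 M).shift := by
    rw [← hshift]
    exact mem_lang_shift_of_walk hess Wbig1
  obtain ⟨p0, qend, hwalkG⟩ := exists_walk_of_mem_lang_shift hU1
  obtain ⟨P, h_mw, rest⟩ := walk_split hwalkG
  obtain ⟨P', h_star, rest2⟩ := walk_split rest
  obtain ⟨P2, h_lm, rest3⟩ := walk_split rest2
  obtain ⟨P3, h_let, h_rm⟩ := walk_split rest3
  -- the star block forces P ∈ {pre, pstar}
  have hce : c + e = (c + e - 1) + 1 := by omega
  have hstarcopy := h_star
  rw [hce, List.replicate_succ] at hstarcopy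
  obtain ⟨s, hs, -⟩ := hstarcopy
  obtain ⟨-, hP⟩ := red1_star_edge hs
  have hP'P : P' = P := red1_star_walk h_star
  -- rule out P = pre i
  have hnotpre : ∀ i : Fin n, P ≠ .pre i := by
    intro i hPi
    rw [hP'P, hPi] at h_lm
    obtain ⟨s2, hs2, hnil⟩ := h_lm
    rw [red1_lm_pre hs2] at hnil
    have hP2 : P2 = V1.st i ((M i).start) := hnil.symm
    rw [hP2] at h_let
    have hP3 : P3 = V1.st i ((M i).evalFrom (M i).start w) := red1_letter_walk h_let
    rw [hP3] at h_rm
    obtain ⟨s3, hs3, -⟩ := h_rm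
    exact hw' i (red1_rm_st hs3)
  have hPp : P = V1.pstar := by
    rcases hP with ⟨i, hPi⟩ | hPp
    · exact absurd hPi (hnotpre i)
    · exact hPp
  -- hence mw is a star word
  rw [hPp] at h_mw
  obtain ⟨-, hmwrep⟩ := red1_walk_to_pstar h_mw
  -- second big walk: ▷ *^|mw| from an accepting state, in G
  obtain ⟨qa, hqa⟩ := hacc ⟨0, hn⟩
  have Gwalk2 : (Red1 M).Walk (.st ⟨0, hn⟩ qa) (.rm :: List.replicate mw.length .star)
      (.pre ⟨0, hn⟩) :=
    ⟨_, Red1Edge.exitAcc ⟨0, hn⟩ qa ⟨0, hn⟩ hqa rfl, red1_pre_star_walk _ _⟩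
  have hU2 : (.rm :: List.replicate mw.length .star) ∈ lang H.shift := by
    rw [hshift]
    exact mem_lang_shift_of_walk hGess Gwalk2
  obtain ⟨P1, r2, hwalkH⟩ := exists_walk_of_mem_lang_shift hU2
  obtain ⟨r1, hrm1, hstars1⟩ := hwalkH
  -- r2 is vH j1
  have hr2 : r2 = vH j1 := by
    have : r2 ∈ H.transSet Set.univ mw := by
      rw [hmwrep]
      exact ⟨r1, Set.mem_univ r1, hstars1⟩
    rwa [hmw] at this
  rw [hr2] at hstars1
  -- third big walk: ▷ *^(|mw|) then the tail, in H
  have Wbig2 : H.Walk P1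
      (.rm :: (List.replicate mw.length .star ++
        (List.replicate e .star ++ ([.lm] ++ (w.map .letter ++ [.rm])))))
      (vH (1 + w.length + 1)) :=
    ⟨r1, hrm1, walk_append hstars1 Wtail⟩
  have hU3 : (.rm :: (List.replicate mw.length .star ++
        (List.replicate e .star ++ ([.lm] ++ (w.map .letter ++ [.rm])))))
      ∈ lang (Red1 M).shift := by
    rw [← hshift]
    exact mem_lang_shift_of_walk hess Wbig2
  obtain ⟨a0, b4, hwalkG2⟩ := exists_walk_of_mem_lang_shift hU3
  obtain ⟨b0, hrmE, rest⟩ := hwalkG2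
  have hb0 : b0 = .pre ⟨0, hn⟩ := red1_rm_edge hn hrmE
  obtain ⟨b1, hstars2, rest2⟩ := walk_split rest
  have hb1 : b1 = b0 := red1_star_walk hstars2
  obtain ⟨b1', hstars3, rest3⟩ := walk_split rest2
  have hb1' : b1' = b1 := red1_star_walk hstars3
  obtain ⟨b2, hlm2, rest4⟩ := walk_split rest3
  rw [hb1', hb1, hb0] at hlm2
  obtain ⟨s4, hs4, hnil4⟩ := hlm2
  rw [red1_lm_pre hs4] at hnil4
  obtain ⟨b3, hlet2, hrm3⟩ := walk_split rest4
  rw [← hnil4] at hlet2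
  have hb3 : b3 = V1.st ⟨0, hn⟩ ((M ⟨0, hn⟩).evalFrom (M ⟨0, hn⟩).start w) :=
    red1_letter_walk hlet2
  rw [hb3] at hrm3
  obtain ⟨s5, hs5, -⟩ := hrm3
  exact hw' ⟨0, hn⟩ (red1_rm_st hs5)

end Backward
section Transport

namespace LabeledGraph

variable {V W A : Type}

/-- relabel a graph along an equivalence of vertex types -/
def relabel (G : LabeledGraph V A) (e : V ≃ W) : LabeledGraph W A :=
  ⟨fun p a q => G.Edge (e.symm p) a (e.symm q)⟩

lemma relabel_walk (G : LabeledGraph V A) (e : V ≃ W) {p q : W} {u : List A} :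
    (G.relabel e).Walk p u q ↔ G.Walk (e.symm p) u (e.symm q) := by
  induction u generalizing p with
  | nil =>
    constructor
    · intro h; exact congrArg e.symm h
    · intro h; exact e.symm.injective h
  | cons a t ih =>
    constructor
    · rintro ⟨r, hr, hw⟩
      exact ⟨e.symm r, hr, ih.1 hw⟩
    · rintro ⟨r, hr, hw⟩
      refine ⟨e r, ?_, ih.2 (by rwa [e.symm_apply_apply])⟩
      show G.Edge (e.symm p) a (e.symm (e r))
      rwa [e.symm_apply_apply]

lemma relabel_det (G : LabeledGraph V A) (e : V ≃ W) (h : G.Deterministic) :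
    (G.relabel e).Deterministic := by
  intro p a q q' h1 h2
  exact e.symm.injective (h _ _ _ _ h1 h2)

lemma relabel_essential (G : LabeledGraph V A) (e : V ≃ W) (h : G.Essential) :
    (G.relabel e).Essential := by
  intro q
  obtain ⟨⟨a, r, hr⟩, ⟨b, p, hp⟩⟩ := h (e.symm q)
  constructor
  · exact ⟨a, e r, show G.Edge (e.symm q) a (e.symm (e r)) by rwa [e.symm_apply_apply]⟩
  · exact ⟨b, e p, show G.Edge (e.symm (e p)) b (e.symm q) by rwa [e.symm_apply_apply]⟩

lemma relabel_sync (G : LabeledGraph V A) (e : V ≃ W) (h : G.Synchronizing) :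
    (G.relabel e).Synchronizing := by
  intro q
  obtain ⟨u, hu⟩ := h (e.symm q)
  refine ⟨u, ?_⟩
  ext z
  simp only [transSet, Set.mem_setOf_eq, Set.mem_singleton_iff]
  constructor
  · rintro ⟨p, -, hw⟩
    have : e.symm z ∈ G.transSet Set.univ u := ⟨e.symm p, Set.mem_univ _,
      (relabel_walk G e).1 hw⟩
    rw [hu] at this
    have := Set.mem_singleton_iff.1 this
    calc z = e (e.symm z) := (e.apply_symm_apply z).symm
    _ = e (e.symm q) := by rw [this]
    _ = q := e.apply_symm_apply q
  · rintro rfl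
    have hm : e.symm z ∈ G.transSet Set.univ u := by rw [hu]; rfl
    obtain ⟨p, -, hw⟩ := hm
    exact ⟨e p, Set.mem_univ _, (relabel_walk G e).2 (by rwa [e.symm_apply_apply])⟩

lemma relabel_shift (G : LabeledGraph V A) (e : V ≃ W) :
    (G.relabel e).shift = G.shift := by
  ext x
  constructor
  · rintro ⟨v, hv⟩
    exact ⟨fun j => e.symm (v j), hv⟩
  · rintro ⟨v, hv⟩
    refine ⟨fun j => e (v j), fun j => ?_⟩
    show G.Edge (e.symm (e (v j))) _ (e.symm (e (v (j + 1))))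
    rw [e.symm_apply_apply, e.symm_apply_apply]
    exact hv j

end LabeledGraph

instance V1.finite {n : ℕ} {Q : Fin n → Type} [∀ i, Finite (Q i)] : Finite (V1 Q) := by
  classical
  let f : V1 Q → (Option (Fin n) × Bool) ⊕ (Σ i, Q i) := fun v => match v with
    | .pre i => .inl (some i, false)
    | .st i q => .inr ⟨i, q⟩
    | .pstar => .inl (none, false)
    | .sstar => .inl (none, true)
  have hf : Function.Injective f := by
    intro a b hab
    cases a <;> cases b <;> simp only [f, Sum.inl.injEq, Sum.inr.injEq, Prod.mk.injEq,
      Option.some.injEq, reduceCtorEq, and_true, and_false, false_and] at hab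
    · rw [hab]
    · obtain ⟨h1, h2⟩ := Sigma.mk.inj_iff.1 hab
      subst h1
      rw [eq_of_heq h2]
    · rfl
    · rfl
  exact Finite.of_injective f hf

end Transport
section Forward

open LabeledGraph

variable {n : ℕ} {Q : Fin n → Type} {A : Type} {M : ∀ i, DFA' (Q i) A}

/-- the graph `G` with the vertex `p*` removed -/
def Red1' (M : ∀ i, DFA' (Q i) A) :
    LabeledGraph {v : V1 Q // v ≠ V1.pstar} (Sym1 A) :=
  ⟨fun p a q => Red1Edge M p.1 a q.1⟩

lemma red1'_det : (Red1' M).Deterministic := by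
  intro p a q q' h h'
  exact Subtype.ext (red1_det (M := M) p.1 a q.1 q'.1 h h')

lemma red1'_essential (hn : 0 < n) (hacc : ∀ i, ((M i).accept).Nonempty)
    (hreach : ∀ i (q : Q i), ∃ w, (M i).evalFrom (M i).start w = q) :
    (Red1' M).Essential := by
  rintro ⟨v, hv⟩
  constructor
  · cases v with
    | pre i => exact ⟨_, ⟨.pre i, by simp⟩, Red1Edge.preLoop i⟩
    | st i q => exact ⟨_, ⟨.st i ((M i).start), by simp⟩, Red1Edge.reset i q⟩
    | pstar => exact absurd rfl hv
    | sstar => exact ⟨_, ⟨.pre ⟨0, hn⟩, by simp⟩, Red1Edge.sstarExit ⟨0, hn⟩ rfl⟩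
  · cases v with
    | pre j =>
      rcases Nat.eq_zero_or_pos (j : ℕ) with hj | hj
      · obtain ⟨qa, hqa⟩ := hacc ⟨0, hn⟩
        exact ⟨_, ⟨.st ⟨0, hn⟩ qa, by simp⟩, Red1Edge.exitAcc ⟨0, hn⟩ qa j hqa hj⟩
      · exact ⟨_, ⟨.pre ⟨(j : ℕ) - 1, by omega⟩, by simp⟩,
          Red1Edge.chain ⟨(j : ℕ) - 1, by omega⟩ j (by simp; omega)⟩
    | st i q =>
      obtain ⟨w, hw⟩ := hreach i q
      rcases List.eq_nil_or_concat w with hw' | ⟨u, a, hw'⟩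
      · subst hw'
        subst hw
        exact ⟨_, ⟨.st i ((M i).start), by simp⟩, Red1Edge.reset i ((M i).start)⟩
      · subst hw'
        have hq : q = (M i).step ((M i).evalFrom (M i).start u) a := by
          rw [← hw]
          simp [DFA'.evalFrom]
        subst hq
        exact ⟨_, ⟨.st i ((M i).evalFrom (M i).start u), by simp⟩,
          Red1Edge.dfaStep i _ a⟩
    | pstar => exact absurd rfl hv
    | sstar =>
      exact ⟨_, ⟨.pre ⟨n - 1, by omega⟩, by simp⟩,
        Red1Edge.lastChain ⟨n - 1, by omega⟩ (by simp; omega)⟩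

/-- walks in `Red1'` from `p_1` along the chain -/
lemma red1'_chain_walk (hn : 0 < n) (k : ℕ) (hk : k < n) :
    (Red1' M).Walk ⟨.pre ⟨0, hn⟩, by simp⟩ (List.replicate k .ell)
      ⟨.pre ⟨k, hk⟩, by simp⟩ := by
  induction k with
  | zero => exact rfl
  | succ k ih =>
    rw [List.replicate_succ']
    refine walk_append (ih (by omega)) ?_
    exact ⟨⟨.pre ⟨k + 1, hk⟩, by simp⟩,
      Red1Edge.chain ⟨k, by omega⟩ ⟨k + 1, hk⟩ rfl, rfl⟩

lemma red1'_sstar_walk (hn : 0 < n) :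
    (Red1' M).Walk ⟨.pre ⟨0, hn⟩, by simp⟩ (List.replicate n .ell)
      ⟨.sstar, by simp⟩ := by
  have h2 : List.replicate n (Sym1.ell (A := A)) =
      List.replicate (n - 1) .ell ++ [.ell] := by
    rw [← List.replicate_succ']
    congr 1
    omega
  rw [h2]
  refine walk_append (red1'_chain_walk hn (n - 1) (by omega)) ?_
  exact ⟨⟨.sstar, by simp⟩, Red1Edge.lastChain ⟨n - 1, by omega⟩ (show n - 1 + 1 = n by omega), rfl⟩

lemma red1'_dfa_walk (i : Fin n) (q : Q i) (u : List A) :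
    (Red1' M).Walk ⟨.st i q, by simp⟩ (u.map .letter)
      ⟨.st i ((M i).evalFrom q u), by simp⟩ := by
  induction u generalizing q with
  | nil => exact rfl
  | cons a t ih =>
    exact ⟨⟨.st i ((M i).step q a), by simp⟩, Red1Edge.dfaStep i q a,
      ih ((M i).step q a)⟩

lemma red1'_sync_of_reach (hn : 0 < n) {v' : {v : V1 Q // v ≠ V1.pstar}}
    {u : List (Sym1 A)} (hu : (Red1' M).Walk ⟨.pre ⟨0, hn⟩, by simp⟩ u v') :
    (Red1' M).transSet Set.univ (.rm :: u) = {v'} := by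
  ext z
  simp only [transSet, Set.mem_setOf_eq, Set.mem_singleton_iff]
  constructor
  · rintro ⟨p, -, r, hr, hw⟩
    have hr0 : r = ⟨.pre ⟨0, hn⟩, by simp⟩ :=
      Subtype.ext (red1_rm_edge (M := M) hn hr)
    rw [hr0] at hw
    exact walk_det red1'_det hw hu
  · rintro rfl
    refine ⟨⟨.sstar, by simp⟩, Set.mem_univ _, ⟨.pre ⟨0, hn⟩, by simp⟩,
      Red1Edge.sstarExit ⟨0, hn⟩ rfl, hu⟩

lemma red1'_sync (hn : 0 < n)
    (hreach : ∀ i (q : Q i), ∃ w, (M i).evalFrom (M i).start w = q) :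
    (Red1' M).Synchronizing := by
  rintro ⟨v, hv⟩
  cases v with
  | pre j =>
    exact ⟨.rm :: List.replicate (j : ℕ) .ell,
      red1'_sync_of_reach hn (red1'_chain_walk hn (j : ℕ) j.isLt)⟩
  | st i q =>
    obtain ⟨w, hw⟩ := hreach i q
    subst hw
    refine ⟨.rm :: (List.replicate (i : ℕ) .ell ++ ([.lm] ++ w.map .letter)),
      red1'_sync_of_reach hn ?_⟩
    have W2 : (Red1' M).Walk ⟨.pre i, by simp⟩ [.lm] ⟨.st i ((M i).start), by simp⟩ :=
      ⟨⟨.st i ((M i).start), by simp⟩, Red1Edge.enter i, rfl⟩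
    exact walk_append (red1'_chain_walk hn (i : ℕ) i.isLt)
      (walk_append W2 (red1'_dfa_walk i ((M i).start) w))
  | pstar => exact absurd rfl hv
  | sstar =>
    exact ⟨.rm :: List.replicate n .ell, red1'_sync_of_reach hn (red1'_sstar_walk hn)⟩

end Forward
section Forward2

open LabeledGraph

variable {n : ℕ} {Q : Fin n → Type} {A : Type} {M : ∀ i, DFA' (Q i) A}

lemma DFA'.evalFrom_take_succ {S : Type} (N : DFA' S A) (q : S) (w : List A)
    (t : ℕ) (ht : t < w.length) :
    N.evalFrom q (w.take (t + 1)) = N.step (N.evalFrom q (w.take t)) (w.get ⟨t, ht⟩) := by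
  have h1 : w.take (t + 1) = w.take t ++ [w.get ⟨t, ht⟩] := by
    rw [← List.take_concat_get' w t ht, List.get_eq_getElem]
  rw [h1]
  simp only [DFA'.evalFrom, List.foldl_append, List.foldl_cons, List.foldl_nil,
    List.get_eq_getElem]

/-- rerouting: any bi-infinite path in `Red1 M` can avoid `p*`,
provided the union of the DFA languages is everything -/
lemma red1_reroute (hn : 0 < n)
    (hU : ∀ w : List A, ∃ i, (M i).evalFrom (M i).start w ∈ (M i).accept)
    {x : ℤ → Sym1 A} (hx : x ∈ (Red1 M).shift) :
    ∃ v : ℤ → V1 Q, (∀ j, (Red1 M).Edge (v j) (x j) (v (j + 1))) ∧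
      ∀ j, v j ≠ V1.pstar := by
  classical
  obtain ⟨v, hv⟩ := hx
  by_cases hall : ∀ j, v j ≠ V1.pstar
  · exact ⟨v, hv, hall⟩
  push_neg at hall
  obtain ⟨ja, hja⟩ := hall
  -- the pstar set is downward closed
  have down : ∀ (t : ℕ) (j : ℤ), v (j + (t : ℤ)) = V1.pstar → v j = V1.pstar := by
    intro t
    induction t with
    | zero => intro j h; simpa using h
    | succ t ih =>
      intro j h
      have hcast : (j + ((t + 1 : ℕ) : ℤ)) = (j + (t : ℤ)) + 1 := by push_cast; ring
      rw [hcast] at h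
      have he := hv (j + (t : ℤ))
      rw [h] at he
      exact ih j (red1_to_pstar he).1
  by_cases h1 : ∀ j, v j = V1.pstar
  · have hx' : ∀ j, x j = .star := by
      intro j
      have he := hv j
      rw [h1 j, h1 (j + 1)] at he
      exact (red1_to_pstar he).2
    exact ⟨fun _ => .pre ⟨0, hn⟩, fun j => by rw [hx' j]; exact Red1Edge.preLoop _,
      fun j => by simp⟩
  push_neg at h1
  obtain ⟨jb, hjb⟩ := h1
  -- the boundary j0
  have hex : ∃ t : ℕ, v (ja + 1 + (t : ℤ)) ≠ V1.pstar := by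
    have hgt : ja < jb := by
      by_contra hcon
      push_neg at hcon
      exact hjb (down (ja - jb).toNat jb
        (by rw [show jb + ((ja - jb).toNat : ℤ) = ja by omega]; exact hja))
    exact ⟨(jb - ja - 1).toNat,
      by rw [show ja + 1 + ((jb - ja - 1).toNat : ℤ) = jb by omega]; exact hjb⟩
  set t0 := Nat.find hex with ht0def
  have ht0 : v (ja + 1 + (t0 : ℤ)) ≠ V1.pstar := Nat.find_spec hex
  have ht0min : ∀ t < t0, v (ja + 1 + (t : ℤ)) = V1.pstar :=
    fun t ht => not_not.mp (Nat.find_min hex ht)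
  set j0 : ℤ := ja + (t0 : ℤ) with hj0def
  have hj0 : v j0 = V1.pstar := by
    rcases Nat.eq_zero_or_pos t0 with h | h
    · rw [show j0 = ja by omega]
      exact hja
    · have := ht0min (t0 - 1) (by omega)
      rwa [show ja + 1 + ((t0 - 1 : ℕ) : ℤ) = j0 by omega] at this
  have hj0' : v (j0 + 1) ≠ V1.pstar := by
    rwa [show j0 + 1 = ja + 1 + (t0 : ℤ) by omega]
  have hle : ∀ j ≤ j0, v j = V1.pstar := fun j hj =>
    down (j0 - j).toNat j (by rw [show j + ((j0 - j).toNat : ℤ) = j0 by omega]; exact hj0)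
  have hgt : ∀ j, j0 < j → v j ≠ V1.pstar := by
    intro j hj hpj
    exact hj0' (down (j - (j0 + 1)).toNat (j0 + 1)
      (by rw [show (j0 + 1) + ((j - (j0 + 1)).toNat : ℤ) = j by omega]; exact hpj))
  have hedge0 := hv j0
  rw [hj0] at hedge0
  have hlm : x j0 = .lm ∧ v (j0 + 1) = .sstar := by
    rcases red1_from_pstar hedge0 with ⟨hq, _⟩ | ⟨hq, ha⟩
    · exact absurd hq hj0'
    · exact ⟨ha, hq⟩
  have hstars : ∀ j < j0, x j = .star := by
    intro j hj
    have he := hv j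
    rw [hle j (by omega), hle (j + 1) (by omega)] at he
    exact (red1_to_pstar he).2
  by_cases h2 : ∀ j, j0 < j → v j = V1.sstar
  · -- case 2a : the path stays in s* forever to the right
    have hA : ∀ t : ℕ, ∃ a : A, x (j0 + 1 + (t : ℤ)) = .letter a := by
      intro t
      have he := hv (j0 + 1 + (t : ℤ))
      rw [h2 _ (by omega), h2 _ (by omega)] at he
      rcases red1_from_sstar he with ⟨b, _, hb⟩ | ⟨jj, _, hq, _⟩
      · exact ⟨b, hb⟩
      · exact absurd hq (by simp)
    choose af haf using hA
    set i0 : Fin n := ⟨0, hn⟩ with hi0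
    set u : ℕ → Q i0 := fun t =>
      Nat.rec ((M i0).start) (fun t qt => (M i0).step qt (af t)) t with hudef
    refine ⟨fun j => if j ≤ j0 then .pre i0 else .st i0 (u (j - (j0 + 1)).toNat),
      ?_, ?_⟩
    · intro j
      dsimp only
      rcases lt_trichotomy j j0 with hj | hj | hj
      · rw [if_pos (le_of_lt hj), if_pos (by omega : j + 1 ≤ j0), hstars j hj]
        exact Red1Edge.preLoop _
      · rw [hj, if_pos le_rfl, if_neg (by omega : ¬ j0 + 1 ≤ j0), hlm.1,
          show (j0 + 1 - (j0 + 1)).toNat = 0 by omega]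
        exact Red1Edge.enter i0
      · rw [if_neg (by omega : ¬ j ≤ j0), if_neg (by omega : ¬ j + 1 ≤ j0)]
        set t : ℕ := (j - (j0 + 1)).toNat with htdef
        have hjt : j0 + 1 + (t : ℤ) = j := by omega
        rw [show (j + 1 - (j0 + 1)).toNat = t + 1 by omega]
        have hu1 : u (t + 1) = (M i0).step (u t) (af t) := rfl
        rw [hu1, ← hjt, haf t]
        exact Red1Edge.dfaStep i0 (u t) (af t)
    · intro j
      dsimp only
      by_cases h : j ≤ j0
      · rw [if_pos h]; simp
      · rw [if_neg h]; simp
  · -- case 2b : the path exits s* via ▷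
    push_neg at h2
    obtain ⟨jc, hjc1, hjc2⟩ := h2
    have hexd : ∃ d : ℕ, v (j0 + 1 + (d : ℤ)) ≠ V1.sstar :=
      ⟨(jc - j0 - 1).toNat,
        by rw [show j0 + 1 + ((jc - j0 - 1).toNat : ℤ) = jc by omega]; exact hjc2⟩
    set d := Nat.find hexd with hddef
    have hd : v (j0 + 1 + (d : ℤ)) ≠ V1.sstar := Nat.find_spec hexd
    have hdmin : ∀ t < d, v (j0 + 1 + (t : ℤ)) = V1.sstar :=
      fun t ht => not_not.mp (Nat.find_min hexd ht)
    have hd1 : 1 ≤ d := by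
      rcases Nat.eq_zero_or_pos d with h | h
      · exfalso
        apply hd
        rw [show j0 + 1 + (d : ℤ) = j0 + 1 by omega]
        exact hlm.2
      · exact h
    set k : ℤ := j0 + (d : ℤ) with hkdef
    have hsst : ∀ j, j0 < j → j ≤ k → v j = V1.sstar := by
      intro j hj hj'
      have := hdmin (j - (j0 + 1)).toNat (by omega)
      rwa [show j0 + 1 + (((j - (j0 + 1)).toNat : ℕ) : ℤ) = j by omega] at this
    have hvk : v k = V1.sstar := hsst k (by omega) le_rfl
    have hkedge := hv k
    rw [hvk] at hkedge
    have hknot : v (k + 1) ≠ V1.sstar := by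
      rwa [show k + 1 = j0 + 1 + (d : ℤ) by omega]
    have hkrm : x k = .rm ∧ v (k + 1) = .pre ⟨0, hn⟩ := by
      rcases red1_from_sstar hkedge with ⟨b, hq, _⟩ | ⟨jj, hjj, hq, ha⟩
      · exact absurd hq hknot
      · exact ⟨ha, by rw [hq]; exact congrArg V1.pre (Fin.ext hjj)⟩
    have hA : ∀ t : Fin (d - 1), ∃ a : A, x (j0 + 1 + (t : ℤ)) = .letter a := by
      intro t
      have ht := t.isLt
      have he := hv (j0 + 1 + (t : ℤ))
      rw [hsst _ (by omega) (by omega), hsst _ (by omega) (by omega)] at he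
      rcases red1_from_sstar he with ⟨b, _, hb⟩ | ⟨jj, _, hq, _⟩
      · exact ⟨b, hb⟩
      · exact absurd hq (by simp)
    set w : List A := List.ofFn (fun t : Fin (d - 1) => (hA t).choose) with hwdef
    have hwlen : w.length = d - 1 := by simp [hwdef]
    have haw : ∀ (t : ℕ) (ht : t < w.length),
        x (j0 + 1 + (t : ℤ)) = .letter (w.get ⟨t, ht⟩) := by
      intro t ht
      have ht' : t < d - 1 := by omega
      have h1 : w.get ⟨t, ht⟩ = (hA ⟨t, ht'⟩).choose := by
        rw [List.get_eq_getElem]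
        simp only [hwdef, List.getElem_ofFn]
      rw [h1]
      exact (hA ⟨t, ht'⟩).choose_spec
    obtain ⟨iW, hiW⟩ := hU w
    refine ⟨fun j => if j ≤ j0 then .pre iW
        else if j ≤ k then .st iW ((M iW).evalFrom (M iW).start (w.take (j - (j0 + 1)).toNat))
        else v j, ?_, ?_⟩
    · intro j
      dsimp only
      rcases lt_trichotomy j j0 with hj | hj | hj
      · rw [if_pos (le_of_lt hj), if_pos (by omega : j + 1 ≤ j0), hstars j hj]
        exact Red1Edge.preLoop _
      · rw [hj, if_pos le_rfl, if_neg (by omega : ¬ j0 + 1 ≤ j0),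
          if_pos (by omega : j0 + 1 ≤ k),
          hlm.1, show (j0 + 1 - (j0 + 1)).toNat = 0 by omega]
        exact Red1Edge.enter iW
      · rcases lt_trichotomy j k with hjk | hjk | hjk
        · rw [if_neg (by omega : ¬ j ≤ j0), if_pos (by omega : j ≤ k),
            if_neg (by omega : ¬ j + 1 ≤ j0), if_pos (by omega : j + 1 ≤ k)]
          set t : ℕ := (j - (j0 + 1)).toNat with htdef
          have hjt : j0 + 1 + (t : ℤ) = j := by omega
          have ht : t < w.length := by omega
          rw [show (j + 1 - (j0 + 1)).toNat = t + 1 by omega,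
            DFA'.evalFrom_take_succ (M iW) _ w t ht, ← hjt, haw t ht]
          exact Red1Edge.dfaStep iW _ _
        · rw [hjk, if_neg (by omega : ¬ k ≤ j0), if_pos le_rfl,
            if_neg (by omega : ¬ k + 1 ≤ j0), if_neg (by omega : ¬ k + 1 ≤ k),
            hkrm.1, hkrm.2, show (k - (j0 + 1)).toNat = w.length by omega,
            List.take_length]
          exact Red1Edge.exitAcc iW _ ⟨0, hn⟩ hiW rfl
        · rw [if_neg (by omega : ¬ j ≤ j0), if_neg (by omega : ¬ j ≤ k),
            if_neg (by omega : ¬ j + 1 ≤ j0), if_neg (by omega : ¬ j + 1 ≤ k)]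
          exact hv j
    · intro j
      dsimp only
      by_cases h : j ≤ j0
      · rw [if_pos h]; simp
      · rw [if_neg h]
        by_cases h' : j ≤ k
        · rw [if_pos h']; simp
        · rw [if_neg h']
          exact hgt j (by omega)

lemma red1'_shift (hn : 0 < n)
    (hU : ∀ w : List A, ∃ i, (M i).evalFrom (M i).start w ∈ (M i).accept) :
    (Red1' M).shift = (Red1 M).shift := by
  ext x
  constructor
  · rintro ⟨v, hv⟩
    exact ⟨fun j => (v j).1, hv⟩
  · intro hx
    obtain ⟨v, hv, hne⟩ := red1_reroute hn hU hx
    exact ⟨fun j => ⟨v j, hne j⟩, hv⟩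

end Forward2
/-- Let `M_1, …, M_n` be DFAs over a common alphabet `Σ`, each with nonempty
accepting set and all states reachable from the initial state, and let `G` be
the graph of the first reduction construction. Then `⋃ᵢ L(Mᵢ) = Σ*` iff `⟨G⟩`
has a synchronizing deterministic presentation. -/
theorem stmt12 {n : ℕ} {Q : Fin n → Type} {A : Type}
    [Fintype A] [∀ i, Fintype (Q i)] (hn : 0 < n)
    (M : ∀ i, DFA' (Q i) A)
    (hacc : ∀ i, ((M i).accept).Nonempty)
    (hreach : ∀ i (q : Q i), ∃ w, (M i).evalFrom (M i).start w = q) :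
    (⋃ i, (M i).lang) = Set.univ ↔
      ∃ (m : ℕ) (H : LabeledGraph (Fin m) (Sym1 A)),
        H.Deterministic ∧ H.Essential ∧ H.Synchronizing ∧
        H.shift = (Red1 M).shift := by
  constructor
  · intro hU
    classical
    have hU' : ∀ w : List A, ∃ i, (M i).evalFrom (M i).start w ∈ (M i).accept := by
      intro w
      have hw : w ∈ ⋃ i, (M i).lang := by rw [hU]; trivial
      obtain ⟨i, hi⟩ := Set.mem_iUnion.1 hw
      exact ⟨i, hi⟩
    haveI : ∀ i, Finite (Q i) := fun i => Finite.of_fintype _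
    haveI : Finite {v : V1 Q // v ≠ V1.pstar} := Subtype.finite
    obtain ⟨m, ⟨e⟩⟩ := Finite.exists_equiv_fin {v : V1 Q // v ≠ V1.pstar}
    refine ⟨m, (Red1' M).relabel e, LabeledGraph.relabel_det _ _ red1'_det,
      LabeledGraph.relabel_essential _ _ (red1'_essential hn hacc hreach),
      LabeledGraph.relabel_sync _ _ (red1'_sync hn hreach), ?_⟩
    rw [LabeledGraph.relabel_shift, red1'_shift hn hU']
  · rintro ⟨m, H, hdet, hess, hsync, hshift⟩
    exact red1_backward hn hacc hreach H hess hsync hshift
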